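/- arXiv:1011.2769 — 4 statements merged into one kernel-verified Lean document; each statement's English description precedes it below -/
import Mathlib

section
/- Let U be a subgroup of the unit circle {z ∈ ℂ : |z| = 1} with −1 ∈ U and with at least 6 elements. Then R(U) is closed under addition: if p, q ∈ R(U), then p + q ∈ R(U). -/
/-- The antisymmetric bracket `⟨x,y⟩ = x·conj(y) − conj(x)·y`. -/
noncomputable def sbr (x y : ℂ) : ℂ :=
  x * (starRingEnd ℂ) y - (starRingEnd ℂ) x * y

/-- The intersection point `I_{u,v}(p,q)` of the lines `L_u(p)` and `L_v(q)`. -/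
noncomputable def Iop (u v p q : ℂ) : ℂ :=
  (sbr u p / sbr u v) * v + (sbr v q / sbr v u) * u

/-- `origamiPts U` is the smallest subset of `ℂ` containing `0` and `1` that is
closed under `(p,q) ↦ I_{u,v}(p,q)` for all `u, v ∈ U` with `u ≠ ±v`.  This is `R(U)`. -/
inductive origamiPts (U : Set ℂ) : ℂ → Prop
  | zero : origamiPts U 0
  | one : origamiPts U 1
  | inter {u v : ℂ} (hu : u ∈ U) (hv : v ∈ U) (huv : u ≠ v) (huv' : u ≠ -v)
      {p q : ℂ} (hp : origamiPts U p) (hq : origamiPts U q) :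
      origamiPts U (Iop u v p q)

/- ### Auxiliary lemmas -/

lemma unit_ne_zero' {z : ℂ} (h : ‖z‖ = 1) : z ≠ 0 := by
  intro h0; simp [h0] at h

lemma conj_unit' {z : ℂ} (h : ‖z‖ = 1) : (starRingEnd ℂ) z = z⁻¹ := by
  rw [Complex.inv_def]
  simp [Complex.normSq_eq_norm_sq, h]

lemma sq_ne_sq' {u v : ℂ} (h1 : u ≠ v) (h2 : u ≠ -v) : u * u - v * v ≠ 0 := by
  intro h
  have : (u - v) * (u + v) = 0 := by linear_combination h
  rcases mul_eq_zero.1 this with h' | h'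
  · exact h1 (sub_eq_zero.1 h')
  · exact h2 (by linear_combination h')

lemma sbr_ne_zero' {u v : ℂ} (hu : ‖u‖ = 1) (hv : ‖v‖ = 1)
    (h1 : u ≠ v) (h2 : u ≠ -v) : sbr u v ≠ 0 := by
  have hu0 := unit_ne_zero' hu
  have hv0 := unit_ne_zero' hv
  rw [sbr, conj_unit' hu, conj_unit' hv]
  intro h
  apply sq_ne_sq' h1 h2
  field_simp at h
  linear_combination h

lemma sbr_conj' (x y : ℂ) : (starRingEnd ℂ) (sbr x y) = - sbr x y := by
  simp [sbr]

lemma real_coeff' (u v q : ℂ) :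
    (starRingEnd ℂ) (sbr u q / sbr u v) = sbr u q / sbr u v := by
  rw [map_div₀, sbr_conj', sbr_conj', neg_div_neg_eq]

lemma sbr_mul_real' {c : ℂ} (h : (starRingEnd ℂ) c = c) (x y : ℂ) :
    sbr x (c * y) = c * sbr x y := by
  simp only [sbr, map_mul, h]; ring

lemma sbr_add' (x y z : ℂ) : sbr x (y + z) = sbr x y + sbr x z := by
  simp only [sbr, map_add]; ring

lemma sbr_zero' (x : ℂ) : sbr x 0 = 0 := by simp [sbr]

lemma Iop_zero' (u v q : ℂ) : Iop u v q 0 = (sbr u q / sbr u v) * v := by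
  simp [Iop, sbr_zero']

lemma Iop_self' {a b : ℂ} (hab : sbr a b ≠ 0) (p : ℂ) :
    Iop a b p p = p := by
  have hab' : a * (starRingEnd ℂ) b - (starRingEnd ℂ) a * b ≠ 0 := by rwa [sbr] at hab
  have hba : b * (starRingEnd ℂ) a - (starRingEnd ℂ) b * a ≠ 0 := by
    intro h; apply hab'; linear_combination -h
  rw [Iop, sbr, sbr, sbr, sbr]
  rw [div_mul_eq_mul_div, div_mul_eq_mul_div, div_add_div _ _ hab' hba,
    div_eq_iff (mul_ne_zero hab' hba)]
  ring

lemma Iop_on_axis' {c v w : ℂ} (h : (starRingEnd ℂ) c = c) (hwv : sbr w v ≠ 0) (X : ℂ) :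
    Iop w v (c * v) X = c * v + (sbr v X / sbr v w) * w := by
  rw [Iop, sbr_mul_real' h, mul_div_assoc, div_self hwv, mul_one]

/-- The key algebraic identity behind closure under translation by a projection. -/
lemma key' (u v w t p q : ℂ)
    (htw : sbr t w ≠ 0) (hwv : sbr w v ≠ 0) (hvt : sbr v t ≠ 0) :
    Iop v t p (Iop w v (Iop u v q 0) (Iop t w p 0)) = p + Iop u v q 0 := by
  have hsym : ∀ x y : ℂ, sbr x y = - sbr y x := by intro x y; simp [sbr]; ring
  have htv : sbr t v ≠ 0 := by rw [hsym]; simpa using hvt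
  have hvw : sbr v w ≠ 0 := by rw [hsym]; simpa using hwv
  rw [Iop_zero' u v q, Iop_zero' t w p,
    Iop_on_axis' (real_coeff' u v q) hwv,
    sbr_mul_real' (real_coeff' t w p), mul_div_assoc,
    div_self hvw, mul_one]
  rw [Iop, sbr_add', sbr_mul_real' (real_coeff' u v q), sbr_mul_real' (real_coeff' t w p)]
  have e1 : sbr t p / sbr t w * sbr t w = sbr t p := by field_simp
  have e2 : (sbr u q / sbr u v * sbr t v + sbr t p) / sbr t v
      = sbr u q / sbr u v + sbr t p / sbr t v := by
    rw [add_div, mul_div_assoc, div_self htv, mul_one]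
  rw [e1, e2, add_mul]
  have hdec : sbr v p / sbr v t * t + sbr t p / sbr t v * v = p := Iop_self' hvt p
  linear_combination hdec

lemma identA' {u v q : ℂ} (hu : ‖u‖ = 1) (hv : ‖v‖ = 1)
    (h1 : u ≠ v) (h2 : u ≠ -v) : Iop v u q 0 + Iop u v q 0 = q := by
  have hu0 := unit_ne_zero' hu
  have hv0 := unit_ne_zero' hv
  have d1 : u * v⁻¹ - u⁻¹ * v ≠ 0 := by
    have := sbr_ne_zero' hu hv h1 h2
    rwa [sbr, conj_unit' hu, conj_unit' hv] at this
  have d2 : v * u⁻¹ - v⁻¹ * u ≠ 0 := by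
    intro h; apply d1; field_simp at h ⊢; linear_combination -h
  simp only [Iop, sbr, map_sub, map_mul, map_add, map_div₀, map_zero, map_inv₀,
    Complex.conj_conj, conj_unit' hu, conj_unit' hv, inv_inv]
  have svu : v*v - u*u ≠ 0 := sq_ne_sq' (Ne.symm h1) (fun h => h2 (by linear_combination h))
  have suv : u*u - v*v ≠ 0 := sq_ne_sq' h1 h2
  have k1 : -(v*u^2) + v^3 ≠ 0 := by
    intro h
    have h' : v*(v*v-u*u) = 0 := by linear_combination h
    rcases mul_eq_zero.1 h' with h''|h''
    · exact hv0 h''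
    · exact svu h''
  have k2 : -(v^2*u) + u^3 ≠ 0 := by
    intro h
    have h' : u*(u*u-v*v) = 0 := by linear_combination h
    rcases mul_eq_zero.1 h' with h''|h''
    · exact hu0 h''
    · exact suv h''
  have k3 : v ^ 2 - u ^ 2 ≠ 0 := by intro h; exact svu (by linear_combination h)
  have k4 : -v ^ 2 + u ^ 2 ≠ 0 := by intro h; exact suv (by linear_combination h)
  field_simp [k1, k2, k3, k4]
  have hx : (-v ^ 2 + u ^ 2) * (-v ^ 2 + u ^ 2)⁻¹ = 1 := mul_inv_cancel₀ k4
  linear_combination (v ^ 2 * q - v ^ 2 * (starRingEnd ℂ) q * u ^ 2) * hx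

/-- Small helper: flip a non-negation fact. -/
lemma ne_neg_symm' {x y : ℂ} (h : x ≠ -y) : y ≠ -x := by
  intro e; exact h (by rw [e, neg_neg])

/-- Closure of `R(U)` under `p ↦ p + I_{u,v}(q,0)`, given three auxiliary directions. -/
lemma addProj' (U : Set ℂ) (hsub : ∀ z ∈ U, ‖z‖ = 1)
    {a b c : ℂ} (ha : a ∈ U) (hb : b ∈ U) (hc : c ∈ U)
    (hab : a ≠ b) (hab' : a ≠ -b) (hac : a ≠ c) (hac' : a ≠ -c)
    (hbc : b ≠ c) (hbc' : b ≠ -c)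
    {u v p q : ℂ} (hu : u ∈ U) (hv : v ∈ U) (huv : u ≠ v) (huv' : u ≠ -v)
    (hp : origamiPts U p) (hq : origamiPts U q) :
    origamiPts U (p + Iop u v q 0) := by
  have main : ∀ w t : ℂ, w ∈ U → t ∈ U → w ≠ v → w ≠ -v → t ≠ v → t ≠ -v →
      t ≠ w → t ≠ -w → origamiPts U (p + Iop u v q 0) := by
    intro w t hw ht hwv hwv' htv htv' htw htw'
    have hvt : v ≠ t := Ne.symm htv
    have hvt' : v ≠ -t := ne_neg_symm' htv'
    rw [← key' u v w t p q
      (sbr_ne_zero' (hsub t ht) (hsub w hw) htw htw')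
      (sbr_ne_zero' (hsub w hw) (hsub v hv) hwv hwv')
      (sbr_ne_zero' (hsub v hv) (hsub t ht) hvt hvt')]
    exact .inter hv ht hvt hvt' hp
      (.inter hw hv hwv hwv'
        (.inter hu hv huv huv' hq .zero)
        (.inter ht hw htw htw' hp .zero))
  by_cases hva : v = a ∨ v = -a
  · -- use w := b, t := c
    rcases hva with rfl | rfl
    · exact main b c hb hc (Ne.symm hab) (ne_neg_symm' hab') (Ne.symm hac)
        (ne_neg_symm' hac') (Ne.symm hbc) (ne_neg_symm' hbc')
    · exact main b c hb hc (ne_neg_symm' hab')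
        (fun e => hab (by rw [neg_neg] at e; exact e.symm))
        (ne_neg_symm' hac')
        (fun e => hac (by rw [neg_neg] at e; exact e.symm))
        (Ne.symm hbc) (ne_neg_symm' hbc')
  · push_neg at hva
    by_cases hvb : v = b ∨ v = -b
    · -- use w := a, t := c
      rcases hvb with rfl | rfl
      · exact main a c ha hc hab hab' (Ne.symm hbc) (ne_neg_symm' hbc') (Ne.symm hac)
          (ne_neg_symm' hac')
      · exact main a c ha hc hab'
          (fun e => hab (by rw [neg_neg] at e; exact e))
          (ne_neg_symm' hbc')
          (fun e => hbc (by rw [neg_neg] at e; exact e.symm))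
          (Ne.symm hac) (ne_neg_symm' hac')
    · push_neg at hvb
      exact main a b ha hb (Ne.symm hva.1) (ne_neg_symm' hva.2) (Ne.symm hvb.1)
        (ne_neg_symm' hvb.2) (Ne.symm hab) (ne_neg_symm' hab')

/-- `R(U)` is closed under addition, for `U` a subgroup of the unit circle
with `-1 ∈ U` and at least 6 elements. -/
theorem stmt_6 (U : Set ℂ)
    (hsub : ∀ z ∈ U, ‖z‖ = 1)
    (hone : (1 : ℂ) ∈ U)
    (hmul : ∀ a ∈ U, ∀ b ∈ U, a * b ∈ U)
    (hinv : ∀ a ∈ U, a⁻¹ ∈ U)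
    (hneg : (-1 : ℂ) ∈ U)
    (hcard : ∃ s : Finset ℂ, ↑s ⊆ U ∧ 6 ≤ s.card)
    {p q : ℂ} (hp : origamiPts U p) (hq : origamiPts U q) :
    origamiPts U (p + q) := by
  obtain ⟨s, hsU, hs6⟩ := hcard
  -- extract three pairwise non-± elements a, b, c of U
  obtain ⟨a, has⟩ := Finset.card_pos.mp (show 0 < s.card by omega)
  have card2 : ∀ x : ℂ, ({x, -x} : Finset ℂ).card ≤ 2 := by
    intro x
    calc ({x, -x} : Finset ℂ).card ≤ ({-x} : Finset ℂ).card + 1 :=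
          Finset.card_insert_le _ _
      _ ≤ 2 := by simp
  have h1 : 4 ≤ (s \ {a, -a}).card := by
    have := Finset.le_card_sdiff ({a, -a} : Finset ℂ) s
    have := card2 a
    omega
  obtain ⟨b, hbs⟩ := Finset.card_pos.mp (by omega : 0 < (s \ {a, -a}).card)
  have h2 : 2 ≤ ((s \ {a, -a}) \ {b, -b}).card := by
    have := Finset.le_card_sdiff ({b, -b} : Finset ℂ) (s \ {a, -a})
    have := card2 b
    omega
  obtain ⟨c, hcs⟩ := Finset.card_pos.mp (by omega : 0 < ((s \ {a, -a}) \ {b, -b}).card)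
  rw [Finset.mem_sdiff] at hbs
  rw [Finset.mem_sdiff, Finset.mem_sdiff] at hcs
  simp only [Finset.mem_insert, Finset.mem_singleton, not_or] at hbs hcs
  have ha : a ∈ U := hsU has
  have hb : b ∈ U := hsU hbs.1
  have hc : c ∈ U := hsU hcs.1.1
  have hab : a ≠ b := Ne.symm hbs.2.1
  have hab' : a ≠ -b := by
    intro e; exact hbs.2.2 (by rw [e, neg_neg])
  have hac : a ≠ c := Ne.symm hcs.1.2.1
  have hac' : a ≠ -c := by
    intro e; exact hcs.1.2.2 (by rw [e, neg_neg])
  have hbc : b ≠ c := Ne.symm hcs.2.1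
  have hbc' : b ≠ -c := by
    intro e; exact hcs.2.2 (by rw [e, neg_neg])
  -- now add the two projections of q (w.r.t. the basis (a, b)) to p, one at a time
  have hba : b ≠ a := Ne.symm hab
  have hba' : b ≠ -a := ne_neg_symm' hab'
  have step1 : origamiPts U (p + Iop a b q 0) :=
    addProj' U hsub ha hb hc hab hab' hac hac' hbc hbc' ha hb hab hab' hp hq
  have step2 : origamiPts U ((p + Iop a b q 0) + Iop b a q 0) :=
    addProj' U hsub ha hb hc hab hab' hac hac' hbc hbc' hb ha hba hba' step1 hq
  have hsum : (p + Iop a b q 0) + Iop b a q 0 = p + q := by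
    rw [add_assoc]
    congr 1
    rw [add_comm]
    exact identA' (hsub a ha) (hsub b hb) hab hab'
  rwa [hsum] at step2
end

section
/- Let U be a subgroup of the unit circle {z ∈ ℂ : |z| = 1} with −1 ∈ U and with at least 6 elements. Then −1 ∈ R(U), and R(U) is closed under additive inverses: if p ∈ R(U), then −p ∈ R(U). -/
lemma negIop (u v p q : ℂ) : Iop u v (-p) (-q) = -Iop u v p q := by
  simp only [Iop, sbr, map_neg]
  ring

lemma step1 (u : ℂ) (hu0 : u ≠ 0) (hc : (starRingEnd ℂ) u = u⁻¹)
    (h2 : u * u ≠ 1) : Iop u (u * u) 0 1 = 1 + u * u := by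
  have h2' : u ^ 2 - 1 ≠ 0 := by
    intro h; exact h2 (by rw [← sq]; linear_combination h)
  have hA : -u ^ 2 + u ^ 4 ≠ 0 := by
    intro h
    rcases mul_eq_zero.1 (show u ^ 2 * (u ^ 2 - 1) = 0 by linear_combination h) with h' | h'
    · exact pow_ne_zero 2 hu0 h'
    · exact h2' h'
  simp only [Iop, sbr, map_mul, map_one, map_zero, hc]
  field_simp [hA]
  linear_combination

lemma step2 (u : ℂ) (hu0 : u ≠ 0) (hc : (starRingEnd ℂ) u = u⁻¹)
    (h4 : u ^ 4 ≠ 1) : Iop (u * u) 1 0 (1 + u * u) = u * u := by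
  have h4' : u ^ 4 - 1 ≠ 0 := sub_ne_zero.2 h4
  have hA : (1 : ℂ) - u ^ 4 ≠ 0 := by
    intro h; exact h4' (by linear_combination -h)
  simp only [Iop, sbr, map_mul, map_one, map_zero, map_add, hc]
  field_simp [hA]
  linear_combination

lemma step3 (u : ℂ) (hu0 : u ≠ 0) (hc : (starRingEnd ℂ) u = u⁻¹)
    (h2 : u * u ≠ 1) : Iop 1 u 0 (u * u) = -1 := by
  have h2' : u ^ 2 - 1 ≠ 0 := by
    intro h; exact h2 (by rw [← sq]; linear_combination h)
  have hA : (-1 : ℂ) + u ^ 2 ≠ 0 := by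
    intro h; exact h2' (by linear_combination h)
  simp only [Iop, sbr, map_mul, map_one, map_zero, hc]
  field_simp [hA]
  linear_combination (1 - u ^ 2) * mul_inv_cancel₀ (show (1 : ℂ) - u ^ 2 ≠ 0 from fun h => hA (by linear_combination -h))

/-- `-1 ∈ R(U)`, and `R(U)` is closed under additive inverses. -/
theorem stmt_7 (U : Set ℂ)
    (hsub : ∀ z ∈ U, ‖z‖ = 1)
    (hone : (1 : ℂ) ∈ U)
    (hmul : ∀ a ∈ U, ∀ b ∈ U, a * b ∈ U)
    (hinv : ∀ a ∈ U, a⁻¹ ∈ U)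
    (hneg : (-1 : ℂ) ∈ U)
    (hcard : ∃ s : Finset ℂ, ↑s ⊆ U ∧ 6 ≤ s.card)
    : origamiPts U (-1) ∧ ∀ p : ℂ, origamiPts U p → origamiPts U (-p) := by
  obtain ⟨s, hsU, hs6⟩ := hcard
  set T : Finset ℂ := {1, -1, Complex.I, -Complex.I} with hT
  have hTcard : T.card ≤ 4 := by
    refine le_trans (Finset.card_insert_le _ _) ?_
    have h2 : (insert (-1) (insert Complex.I {-Complex.I}) : Finset ℂ).card ≤ 3 := by
      refine le_trans (Finset.card_insert_le _ _) ?_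
      have h3 : (insert Complex.I {-Complex.I} : Finset ℂ).card ≤ 2 := by
        refine le_trans (Finset.card_insert_le _ _) ?_
        simp
      omega
    omega
  have hns : ¬ s ⊆ T := fun h => by have := Finset.card_le_card h; omega
  obtain ⟨u, hus, huT⟩ := Finset.not_subset.1 hns
  have huU : u ∈ U := hsU hus
  simp only [hT, Finset.mem_insert, Finset.mem_singleton, not_or] at huT
  obtain ⟨h1, hm1, hI, hmI⟩ := huT
  have habs : ‖u‖ = 1 := hsub u huU
  have hu0 : u ≠ 0 := by
    intro h; rw [h] at habs; simp at habs
  have hc : (starRingEnd ℂ) u = u⁻¹ := (Complex.inv_eq_conj habs).symm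
  have h2 : u * u ≠ 1 := by
    intro h
    rcases mul_eq_zero.1 (show (u - 1) * (u + 1) = 0 by linear_combination h) with h' | h'
    · exact h1 (sub_eq_zero.1 h')
    · exact hm1 (eq_neg_of_add_eq_zero_left h')
  have h2' : u * u ≠ -1 := by
    intro h
    have hfac : (u - Complex.I) * (u + Complex.I) = 0 := by
      have hI2 : Complex.I ^ 2 = -1 := Complex.I_sq
      linear_combination h - hI2
    rcases mul_eq_zero.1 hfac with h' | h'
    · exact hI (sub_eq_zero.1 h')
    · exact hmI (eq_neg_of_add_eq_zero_left h')
  have h4 : u ^ 4 ≠ 1 := by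
    intro h
    rcases mul_eq_zero.1 (show (u * u - 1) * (u * u + 1) = 0 by linear_combination h)
      with h' | h'
    · exact h2 (sub_eq_zero.1 h')
    · exact h2' (eq_neg_of_add_eq_zero_left h')
  have huu : u * u ∈ U := hmul u huU u huU
  have hne1 : u ≠ u * u := by
    intro h
    exact h1 (mul_left_cancel₀ hu0 (by rw [mul_one, ← h])).symm
  have hne1' : u ≠ -(u * u) := by
    intro h
    rcases mul_eq_zero.1 (show u * (1 + u) = 0 by linear_combination h) with h' | h'
    · exact hu0 h'
    · exact hm1 (by linear_combination h')
  have hne3 : (1 : ℂ) ≠ -u := by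
    intro h
    exact hm1 (by linear_combination h)
  have k1 : origamiPts U (Iop u (u * u) 0 1) :=
    .inter huU huu hne1 hne1' .zero .one
  rw [step1 u hu0 hc h2] at k1
  have k2 : origamiPts U (Iop (u * u) 1 0 (1 + u * u)) :=
    .inter huu hone h2 h2' .zero k1
  rw [step2 u hu0 hc h4] at k2
  have k3 : origamiPts U (Iop 1 u 0 (u * u)) :=
    .inter hone huU (Ne.symm h1) hne3 .zero k2
  rw [step3 u hu0 hc h2] at k3
  refine ⟨k3, ?_⟩
  intro p hp
  induction hp with
  | zero => rw [neg_zero]; exact .zero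
  | one => exact k3
  | inter hu hv huv huv' hp hq ihp ihq =>
      rw [← negIop]
      exact .inter hu hv huv huv' ihp ihq
end

section
/- Let n ≥ 4 be a composite integer, let ζ = exp(2πi/n), and let p be a prime dividing n. Then there exist an element x ∈ ℤ[ζ] and a finite list of pairs of integers (a_1,b_1), …, (a_k,b_k), with no a_i or b_i divisible by n, such that x · ∏_{i=1}^{k} (1 − ζ^{a_i})/(1 − ζ^{b_i}) = 1/p. -/
open Polynomial Finset

lemma helper_closure {ζ : ℂ} {n m : ℕ} (hn : 0 < n) (hζ : IsPrimitiveRoot ζ n)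
    (hm : m ∣ n) (hm1 : 1 < m) {s : ℕ} (hs : s ≤ m.totient) :
    ∃ x ∈ Subring.closure {ζ}, x * (1 - ζ ^ (n / m)) ^ s = (Polynomial.cyclotomic m ℂ).eval 1 := by
  have : NeZero m := ⟨by omega⟩
  set η := ζ ^ (n / m) with hηdef
  have hη : IsPrimitiveRoot η m := hζ.pow hn (Nat.div_mul_cancel hm).symm
  have hηmem : η ∈ Subring.closure ({ζ} : Set ℂ) :=
    pow_mem (Subring.subset_closure (Set.mem_singleton ζ)) _
  have hne : (1 : ℂ) - η ≠ 0 := sub_ne_zero.mpr (hη.ne_one hm1).symm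
  have hsubmem : (1 : ℂ) - η ∈ Subring.closure ({ζ} : Set ℂ) := sub_mem (one_mem _) hηmem
  have key : ∀ μ ∈ primitiveRoots m ℂ,
      (1 - μ) / (1 - η) ∈ Subring.closure ({ζ} : Set ℂ) := by
    intro μ hμ
    have hμm : μ ^ m = 1 := ((mem_primitiveRoots (by omega)).mp hμ).pow_eq_one
    obtain ⟨i, hi, hiμ⟩ := hη.eq_pow_of_pow_eq_one hμm
    have hgeo : ((Finset.range i).sum (η ^ ·)) * (1 - η) = 1 - μ := by
      have := geom_sum_mul η i
      rw [← hiμ]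
      linear_combination -this
    rw [← hgeo, mul_div_cancel_right₀ _ hne]
    exact sum_mem fun j _ => pow_mem hηmem j
  have hprod : (Polynomial.cyclotomic m ℂ).eval 1
      = ∏ μ ∈ primitiveRoots m ℂ, (1 - μ) := by
    rw [cyclotomic_eq_prod_X_sub_primitiveRoots hη, eval_prod]
    simp
  have hsplit : ∏ μ ∈ primitiveRoots m ℂ, (1 - μ)
      = (1 - η) ^ m.totient * ∏ μ ∈ primitiveRoots m ℂ, ((1 - μ) / (1 - η)) := by
    rw [← hη.card_primitiveRoots, ← Finset.prod_const, ← Finset.prod_mul_distrib]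
    refine Finset.prod_congr rfl fun μ _ => ?_
    rw [mul_div_cancel₀ _ hne]
  refine ⟨(1 - η) ^ (m.totient - s) * ∏ μ ∈ primitiveRoots m ℂ, ((1 - μ) / (1 - η)),
    mul_mem (pow_mem hsubmem _) (prod_mem key), ?_⟩
  rw [hprod, hsplit]
  rw [mul_right_comm, ← pow_add, Nat.sub_add_cancel hs]

lemma prod_mod_pow {M : Type*} [CommMonoid M] (f : ℕ → M) (m t : ℕ) (hm : 0 < m) :
    ∏ i ∈ Finset.range (t * m), f (i % m) = (∏ i ∈ Finset.range m, f i) ^ t := by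
  induction t with
  | zero => simp
  | succ t ih =>
      rw [Nat.succ_mul, Finset.prod_range_add, ih, pow_succ]
      congr 1
      refine Finset.prod_congr rfl fun i hi => ?_
      rw [Finset.mem_range] at hi
      simp [Nat.add_mod, Nat.mul_mod_left, Nat.mod_eq_of_lt hi]

/-- For `n ≥ 4` composite, `ζ = exp(2πi/n)`, and `p` a prime dividing `n`, there are
`x ∈ ℤ[ζ]` and a finite list of pairs of integers `(aᵢ, bᵢ)`, none divisible by `n`,
with `x · ∏ᵢ (1 − ζ^{aᵢ})/(1 − ζ^{bᵢ}) = 1/p`. -/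
theorem stmt_16 (n : ℕ) (hn : 4 ≤ n) (hnp : ¬ n.Prime)
    (p : ℕ) (hp : p.Prime) (hpn : p ∣ n) :
    ∃ x ∈ Subring.closure {Complex.exp (2 * Real.pi * Complex.I / n)},
      ∃ (k : ℕ) (a b : Fin k → ℤ),
        (∀ i, ¬ (n : ℤ) ∣ a i) ∧ (∀ i, ¬ (n : ℤ) ∣ b i) ∧
        x * ∏ i, (1 - Complex.exp (2 * Real.pi * Complex.I / n) ^ a i) /
            (1 - Complex.exp (2 * Real.pi * Complex.I / n) ^ b i)
          = 1 / (p : ℂ) := by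
  have hn0 : 0 < n := by omega
  set ζ := Complex.exp (2 * Real.pi * Complex.I / n) with hζdef
  have hζ : IsPrimitiveRoot ζ n := Complex.isPrimitiveRoot_exp n (by omega)
  have hp2 : 2 ≤ p := hp.two_le
  have hpne : (p : ℂ) ≠ 0 := Nat.cast_ne_zero.mpr (by omega)
  haveI : Fact p.Prime := ⟨hp⟩
  obtain ⟨m, t, hmn, hm1, ht1, hts, hΦ⟩ :
      ∃ m t : ℕ, m ∣ n ∧ 1 < m ∧ 1 ≤ t ∧ t * (p - 1) ≤ m.totient ∧
        (Polynomial.cyclotomic m ℂ).eval 1 = (p : ℂ) ^ (t - 1) := by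
    by_cases hpp : IsPrimePow n
    · obtain ⟨q, k, hq, hk, hqk⟩ := hpp
      rw [← Nat.prime_iff] at hq
      have hpq : p = q := by
        have : p ∣ q := hp.dvd_of_dvd_pow (hqk ▸ hpn)
        exact (Nat.prime_dvd_prime_iff_eq hp hq).mp this
      subst hpq
      have hk2 : 2 ≤ k := by
        by_contra h
        have hk1 : k = 1 := by omega
        rw [hk1, pow_one] at hqk
        exact hnp (hqk ▸ hq)
      refine ⟨p ^ 2, 2, ?_, ?_, by omega, ?_, ?_⟩
      · exact hqk ▸ pow_dvd_pow p hk2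
      · rw [pow_two]; nlinarith
      · rw [Nat.totient_prime_pow hp (by omega)]
        norm_num
        exact Nat.mul_le_mul_right _ hp2
      · have := Polynomial.eval_one_cyclotomic_prime_pow (R := ℂ) (p := p) 1
        simpa using this
    · refine ⟨n, 1, dvd_rfl, by omega, le_refl 1, ?_, ?_⟩
      · rw [one_mul]
        have h1 : p.totient ∣ n.totient := Nat.totient_dvd_of_dvd hpn
        rw [Nat.totient_prime hp] at h1
        exact Nat.le_of_dvd (Nat.totient_pos.mpr hn0) h1
      · rw [Polynomial.eval_one_cyclotomic_not_prime_pow]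
        · simp
        · intro q hq k hqk
          rcases Nat.eq_zero_or_pos k with rfl | hk
          · simp at hqk; omega
          · exact hpp ⟨q, k, hq.prime, hk, hqk⟩
  -- set up data
  set K := t * (p - 1) with hKdef
  have hω : IsPrimitiveRoot (ζ ^ (n / p)) p := hζ.pow hn0 (Nat.div_mul_cancel hpn).symm
  have hnm_pos : 0 < n / m := Nat.div_pos (Nat.le_of_dvd hn0 hmn) (by omega)
  have hnm_lt : n / m < n := Nat.div_lt_self hn0 hm1
  have hnp_pos : 0 < n / p := Nat.div_pos (Nat.le_of_dvd hn0 hpn) (by omega)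
  have hnpmul : p * (n / p) = n := Nat.mul_div_cancel' hpn
  obtain ⟨x, hxmem, hx⟩ := helper_closure hn0 hζ hmn hm1 hts
  refine ⟨x, hxmem, K, fun _ => ((n / m : ℕ) : ℤ), fun i => (((i : ℕ) % (p - 1) + 1) * (n / p) : ℕ), ?_, ?_, ?_⟩
  · intro i
    rw [Int.natCast_dvd_natCast]
    intro h
    exact absurd (Nat.le_of_dvd hnm_pos h) (by omega)
  · intro i
    rw [Int.natCast_dvd_natCast]
    intro h
    have hj : (i : ℕ) % (p - 1) < p - 1 := Nat.mod_lt _ (by omega)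
    have hb1 : 0 < ((i : ℕ) % (p - 1) + 1) * (n / p) := by positivity
    have hb2 : ((i : ℕ) % (p - 1) + 1) * (n / p) < n := by
      have hsub : (p - 1) * (n / p) = p * (n / p) - 1 * (n / p) := Nat.sub_mul p 1 (n / p)
      have hle : ((i : ℕ) % (p - 1) + 1) * (n / p) ≤ (p - 1) * (n / p) :=
        Nat.mul_le_mul_right _ (by omega)
      omega
    exact absurd (Nat.le_of_dvd hb1 h) (by omega)
  · have hrw : ∀ i : Fin K,
        (1 - ζ ^ ((((n / m : ℕ)) : ℤ))) / (1 - ζ ^ (((((i : ℕ) % (p - 1) + 1) * (n / p) : ℕ)) : ℤ))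
        = (1 - ζ ^ (n / m)) / (1 - (ζ ^ (n / p)) ^ ((i : ℕ) % (p - 1) + 1)) := by
      intro i
      rw [zpow_natCast, zpow_natCast, mul_comm ((i : ℕ) % (p - 1) + 1) (n / p), pow_mul]
    rw [Finset.prod_congr rfl (fun i _ => hrw i), Finset.prod_div_distrib,
      Finset.prod_const, Finset.card_univ, Fintype.card_fin]
    have hden : ∏ i : Fin K, (1 - (ζ ^ (n / p)) ^ ((i : ℕ) % (p - 1) + 1)) = (p : ℂ) ^ t := by
      rw [Fin.prod_univ_eq_prod_range (fun i => 1 - (ζ ^ (n / p)) ^ (i % (p - 1) + 1)) K,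
        hKdef, prod_mod_pow (fun i => 1 - (ζ ^ (n / p)) ^ (i + 1)) (p - 1) t (by omega)]
      congr 1
      have hp1 : p - 1 + 1 = p := by omega
      have := IsPrimitiveRoot.prod_one_sub_pow_eq_order (n := p - 1) (μ := ζ ^ (n / p)) (hp1 ▸ hω)
      rw [this]
      norm_cast
    rw [hden, mul_div_assoc' x _ _, hx, hΦ]
    rw [show t = (t - 1) + 1 by omega, pow_succ]
    rw [Nat.add_sub_cancel]
    rw [div_mul_eq_div_div, div_self (pow_ne_zero _ hpne)]
end

section
/- For every integer n > 3, the set R(U_n) is dense in the complex plane ℂ. -/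
namespace OrigamiDenseAux

/-! ### Pure algebra about `sbr` and `Iop` -/

lemma sbr_conj (x y : ℂ) : (starRingEnd ℂ) (sbr x y) = - sbr x y := by
  simp only [sbr, map_sub, map_mul, Complex.conj_conj]; ring

lemma sbr_swap (x y : ℂ) : sbr y x = - sbr x y := by simp only [sbr]; ring

lemma sbr_zero_right (x : ℂ) : sbr x 0 = 0 := by simp [sbr]

lemma sbr_self (x : ℂ) : sbr x x = 0 := by simp only [sbr]; ring

lemma sbr_neg_self (x : ℂ) : sbr (-x) x = 0 := by simp only [sbr, map_neg]; ring

lemma sbr_smul (x y c : ℂ) (hc : (starRingEnd ℂ) c = c) : sbr x (c * y) = c * sbr x y := by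
  simp only [sbr, map_mul, hc]; ring

lemma conj_div_sbr (a b c d : ℂ) : (starRingEnd ℂ) (sbr a b / sbr c d) = sbr a b / sbr c d := by
  rw [map_div₀, sbr_conj, sbr_conj, neg_div_neg_eq]

lemma sbr_add (x y z : ℂ) : sbr x (y + z) = sbr x y + sbr x z := by
  simp only [sbr, map_add]; ring

lemma decomp (u v p : ℂ) (h : sbr u v ≠ 0) :
    (sbr u p / sbr u v) * v + (sbr v p / sbr v u) * u = p := by
  have hc : sbr u p * v - sbr v p * u = sbr u v * p := by simp only [sbr]; ring
  rw [sbr_swap u v, div_neg, neg_mul, ← sub_eq_add_neg, div_mul_eq_mul_div, div_mul_eq_mul_div,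
    ← sub_div, hc]
  exact mul_div_cancel_left₀ p h

lemma Iop_left (u v p : ℂ) : Iop u v p 0 = (sbr u p / sbr u v) * v := by
  simp [Iop, sbr_zero_right]

lemma Iop_right (u v q : ℂ) : Iop u v 0 q = (sbr v q / sbr v u) * u := by
  simp [Iop, sbr_zero_right]

lemma add_identity (u v w p q : ℂ) (h1 : sbr u v ≠ 0) (h2 : sbr u w ≠ 0) (h3 : sbr v w ≠ 0) :
    Iop u v (Iop v w (Iop u w p 0) (Iop u v q 0)) (Iop u w (Iop v w p 0) (Iop u v 0 q)) = p + q := by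
  have h1' : sbr v u ≠ 0 := by rw [sbr_swap]; simpa using h1
  have h2' : sbr w u ≠ 0 := by rw [sbr_swap]; simpa using h2
  have h3' : sbr w v ≠ 0 := by rw [sbr_swap]; simpa using h3
  have hA : Iop v w (Iop u w p 0) (Iop u v q 0)
      = (sbr u p / sbr u w) * w + (sbr u q / sbr u v) * v := by
    rw [Iop_left, Iop_left]
    simp only [Iop, sbr_smul _ _ _ (conj_div_sbr u p u w), sbr_smul _ _ _ (conj_div_sbr u q u v)]
    rw [mul_div_assoc, div_self h3, mul_div_assoc, div_self h3']
    ring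
  have hB : Iop u w (Iop v w p 0) (Iop u v 0 q)
      = (sbr v p / sbr v w) * w + (sbr v q / sbr v u) * u := by
    rw [Iop_left, Iop_right]
    simp only [Iop, sbr_smul _ _ _ (conj_div_sbr v p v w), sbr_smul _ _ _ (conj_div_sbr v q v u)]
    rw [mul_div_assoc, div_self h2, mul_div_assoc, div_self h2']
    ring
  rw [hA, hB]
  have eA : sbr u ((sbr u p / sbr u w) * w + (sbr u q / sbr u v) * v) = sbr u (p + q) := by
    rw [sbr_add, sbr_smul _ _ _ (conj_div_sbr u p u w), sbr_smul _ _ _ (conj_div_sbr u q u v),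
      sbr_add]
    field_simp
  have eB : sbr v ((sbr v p / sbr v w) * w + (sbr v q / sbr v u) * u) = sbr v (p + q) := by
    rw [sbr_add, sbr_smul _ _ _ (conj_div_sbr v p v w), sbr_smul _ _ _ (conj_div_sbr v q v u),
      sbr_add]
    field_simp
  simp only [Iop, eA, eB]
  exact decomp u v (p + q) h1

/-! ### Roots of unity -/

noncomputable def Eang (n : ℕ) (a : ℤ) : ℂ := Complex.exp ((a : ℝ) * (Real.pi / n) * Complex.I)

lemma two_I_sin (x : ℂ) : 2 * Complex.I * Complex.sin x
    = Complex.exp (x * Complex.I) - Complex.exp (-x * Complex.I) := by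
  rw [Complex.sin]
  linear_combination (Complex.exp (-x * Complex.I) - Complex.exp (x * Complex.I)) * Complex.I_sq

lemma two_I_ne : (2 : ℂ) * Complex.I ≠ 0 := by simp [Complex.I_ne_zero]

variable {n : ℕ}

lemma E_mem (hn0 : 0 < n) (a : ℤ) : (Eang n a) ^ (2 * n) = 1 := by
  rw [Eang, ← Complex.exp_nat_mul]
  rw [show ((2 * n : ℕ) : ℂ) * ((a : ℝ) * (Real.pi / n) * Complex.I)
      = (a : ℤ) * (2 * Real.pi * Complex.I) by
    push_cast
    have : (n : ℂ) ≠ 0 := by exact_mod_cast Nat.cast_ne_zero.mpr hn0.ne'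
    field_simp]
  exact Complex.exp_int_mul_two_pi_mul_I a

lemma E_mul (a b : ℤ) : Eang n a * Eang n b = Eang n (a + b) := by
  rw [Eang, Eang, Eang, ← Complex.exp_add]
  congr 1
  push_cast
  ring

lemma E_conj (a : ℤ) : (starRingEnd ℂ) (Eang n a) = Eang n (-a) := by
  rw [Eang, ← Complex.exp_conj]
  congr 1
  simp only [map_mul, map_inv₀, Complex.conj_I, Complex.conj_ofReal, map_natCast, map_intCast,
    map_div₀]
  push_cast
  ring

lemma E_zero : Eang n 0 = 1 := by simp [Eang]

lemma E_4n (hn0 : 0 < n) : Eang n (4 * n) = 1 := by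
  have h := Complex.exp_int_mul_two_pi_mul_I 2
  rw [Eang, ← h]
  congr 1
  have : (n : ℂ) ≠ 0 := by exact_mod_cast Nat.cast_ne_zero.mpr hn0.ne'
  push_cast
  field_simp
  ring

lemma sbr_E (a b : ℤ) : sbr (Eang n a) (Eang n b)
    = (2 * Complex.I) * ((Real.sin (((a - b : ℤ) : ℝ) * (Real.pi / n)) : ℝ) : ℂ) := by
  set r : ℝ := ((a - b : ℤ) : ℝ) * (Real.pi / n) with hr
  have ea : Eang n (a + -b) = Complex.exp ((r : ℂ) * Complex.I) := by
    rw [Eang]; congr 1; rw [hr]; push_cast; ring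
  have eb : Eang n (-a + b) = Complex.exp (-(r : ℂ) * Complex.I) := by
    rw [Eang]; congr 1; rw [hr]; push_cast; ring
  rw [sbr, E_conj, E_conj, E_mul, E_mul, ea, eb, Complex.ofReal_sin, two_I_sin]

lemma sin_ne (hn : 4 ≤ n) {m : ℤ} (h1 : ¬ ((2 * n : ℤ)) ∣ m) (h2 : ¬ ((2 * n : ℤ)) ∣ (m - n)) :
    Real.sin ((m : ℝ) * (Real.pi / n)) ≠ 0 := by
  intro h
  rcases Real.sin_eq_zero_iff.mp h with ⟨k, hk⟩
  have hπ : (Real.pi : ℝ) ≠ 0 := Real.pi_ne_zero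
  have hn0 : (n : ℝ) ≠ 0 := by positivity
  have h' : ((k * n : ℤ) : ℝ) * Real.pi = (m : ℝ) * Real.pi := by
    push_cast
    field_simp at hk
    rw [hk]
  have hmk : m = k * n := by
    have := mul_right_cancel₀ hπ h'
    exact_mod_cast this.symm
  rcases Int.even_or_odd k with ⟨j, hj⟩ | ⟨j, hj⟩
  · exact h1 ⟨j, by rw [hmk, hj]; ring⟩
  · exact h2 ⟨j, by rw [hmk, hj]; ring⟩

lemma sbr_E_ne (hn : 4 ≤ n) {a b : ℤ} (h1 : ¬ ((2 * n : ℤ)) ∣ (a - b))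
    (h2 : ¬ ((2 * n : ℤ)) ∣ (a - b - n)) : sbr (Eang n a) (Eang n b) ≠ 0 := by
  rw [sbr_E]
  exact mul_ne_zero two_I_ne (Complex.ofReal_ne_zero.mpr (sin_ne hn h1 h2))

lemma E_ne (hn : 4 ≤ n) {a b : ℤ} (h1 : ¬ ((2 * n : ℤ)) ∣ (a - b))
    (h2 : ¬ ((2 * n : ℤ)) ∣ (a - b - n)) :
    Eang n a ≠ Eang n b ∧ Eang n a ≠ -Eang n b := by
  have hs := sbr_E_ne hn h1 h2
  constructor
  · intro h; rw [h] at hs; exact hs (sbr_self _)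
  · intro h; rw [h] at hs; exact hs (sbr_neg_self _)

lemma nd1 {N m : ℤ} (h0 : 0 < m) (h : m < N) : ¬ N ∣ m := fun hd =>
  absurd (Int.le_of_dvd h0 hd) (not_le.mpr h)

/-! ### Constructions in `R(U_n)` -/

def Uset (n : ℕ) : Set ℂ := {w : ℂ | w ^ (2 * n) = 1}

lemma E_memU (hn0 : 0 < n) (a : ℤ) : Eang n a ∈ Uset n := E_mem hn0 a

/-- basic step: from `r·ζ^g` construct `r·(sin((a-g)θ)/sin((a-b)θ))·ζ^b`. -/
lemma step (hn : 4 ≤ n) {r : ℝ} {g : ℤ} (hp : origamiPts (Uset n) ((r : ℂ) * Eang n g))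
    (a b : ℤ) (h1 : ¬ ((2 * n : ℤ)) ∣ (a - b)) (h2 : ¬ ((2 * n : ℤ)) ∣ (a - b - n)) :
    origamiPts (Uset n)
      (((r * (Real.sin (((a - g : ℤ) : ℝ) * (Real.pi / n)) /
          Real.sin (((a - b : ℤ) : ℝ) * (Real.pi / n))) : ℝ) : ℂ) * Eang n b) := by
  have hn0 : 0 < n := by omega
  have hne := E_ne hn h1 h2
  have h := origamiPts.inter (E_memU hn0 a) (E_memU hn0 b) hne.1 hne.2 hp origamiPts.zero
  have hc : (starRingEnd ℂ) ((r : ℝ) : ℂ) = ((r : ℝ) : ℂ) := Complex.conj_ofReal r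
  have heq : Iop (Eang n a) (Eang n b) ((r : ℂ) * Eang n g) 0
      = ((r * (Real.sin (((a - g : ℤ) : ℝ) * (Real.pi / n)) /
          Real.sin (((a - b : ℤ) : ℝ) * (Real.pi / n))) : ℝ) : ℂ) * Eang n b := by
    rw [Iop, sbr_zero_right, zero_div, zero_mul, add_zero, sbr_smul _ _ _ hc, sbr_E, sbr_E]
    rw [show ((r : ℂ) * (2 * Complex.I *
          ((Real.sin (((a - g : ℤ) : ℝ) * (Real.pi / n)) : ℝ) : ℂ)))
        = (2 * Complex.I) * ((r : ℂ) *
          ((Real.sin (((a - g : ℤ) : ℝ) * (Real.pi / n)) : ℝ) : ℂ)) from by ring]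
    rw [mul_div_mul_left _ _ two_I_ne]
    push_cast
    ring
  rwa [heq] at h

/-- sign-flip move: from `r·ζ^g` construct `-r·ζ^(g+2m)`. -/
lemma moveFlip (hn : 4 ≤ n) (m : ℤ) (hm1 : ¬ ((2 * n : ℤ)) ∣ m) (hm2 : ¬ ((2 * n : ℤ)) ∣ (m + n))
    {r : ℝ} {g : ℤ} (hp : origamiPts (Uset n) ((r : ℂ) * Eang n g)) :
    origamiPts (Uset n) (((-r : ℝ) : ℂ) * Eang n (g + 2 * m)) := by
  have h1 : ¬ ((2 * n : ℤ)) ∣ (g + m - (g + 2 * m)) := by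
    rw [show g + m - (g + 2 * m) = -m from by ring, dvd_neg]; exact hm1
  have h2 : ¬ ((2 * n : ℤ)) ∣ (g + m - (g + 2 * m) - n) := by
    rw [show g + m - (g + 2 * m) - n = -(m + n) from by ring, dvd_neg]; exact hm2
  have hs : Real.sin ((m : ℝ) * (Real.pi / n)) ≠ 0 := by
    refine sin_ne hn hm1 fun hd => hm2 ?_
    have := dvd_add hd (dvd_refl (2 * n : ℤ))
    rwa [show m - n + 2 * n = m + n from by ring] at this
  have h := step hn hp (g + m) (g + 2 * m) h1 h2
  rw [show (g + m - g : ℤ) = m from by ring,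
    show (g + m - (g + 2 * m) : ℤ) = -m from by ring] at h
  rw [show ((-m : ℤ) : ℝ) = -(m : ℝ) from by push_cast; ring, neg_mul, Real.sin_neg,
    div_neg, div_self hs, mul_neg_one] at h
  exact h

/-- shrink move: from `r·ζ^g` construct `r·(sin θ / sin 2θ)·ζ^(g-1)`. -/
lemma moveShrink (hn : 4 ≤ n) {r : ℝ} {g : ℤ}
    (hp : origamiPts (Uset n) ((r : ℂ) * Eang n g)) :
    origamiPts (Uset n)
      (((r * (Real.sin (Real.pi / n) / Real.sin (2 * (Real.pi / n))) : ℝ) : ℂ)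
        * Eang n (g - 1)) := by
  have hn' : (4 : ℤ) ≤ (n : ℤ) := by exact_mod_cast hn
  have h1 : ¬ ((2 * n : ℤ)) ∣ (g + 1 - (g - 1)) := by
    rw [show g + 1 - (g - 1) = 2 from by ring]; exact nd1 (by norm_num) (by omega)
  have h2 : ¬ ((2 * n : ℤ)) ∣ (g + 1 - (g - 1) - n) := by
    rw [show g + 1 - (g - 1) - n = -(n - 2) from by ring, dvd_neg]
    exact nd1 (by omega) (by omega)
  have h := step hn hp (g + 1) (g - 1) h1 h2
  rw [show (g + 1 - g : ℤ) = 1 from by ring, show (g + 1 - (g - 1) : ℤ) = 2 from by ring] at h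
  rw [show ((1 : ℤ) : ℝ) = 1 from by norm_num, show ((2 : ℤ) : ℝ) = 2 from by norm_num,
    one_mul] at h
  exact h

/-- the cycle: multiply the coefficient by `-(sinθ/sin 2θ)²`, staying in the same direction. -/
lemma moveCycle (hn : 4 ≤ n) {r : ℝ} {g : ℤ}
    (hp : origamiPts (Uset n) ((r : ℂ) * Eang n g)) :
    origamiPts (Uset n)
      (((-(Real.sin (Real.pi / n) / Real.sin (2 * (Real.pi / n)))^2 * r : ℝ) : ℂ)
        * Eang n g) := by
  have hn' : (4 : ℤ) ≤ (n : ℤ) := by exact_mod_cast hn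
  have h1 := moveShrink hn (moveShrink hn hp)
  have h2 := moveFlip hn 1 (nd1 (by norm_num) (by omega))
    (nd1 (by omega) (by omega)) h1
  rw [show (g - 1 - 1 + 2 * 1 : ℤ) = g from by ring] at h2
  rw [show (-(r * (Real.sin (Real.pi / n) / Real.sin (2 * (Real.pi / n))) *
      (Real.sin (Real.pi / n) / Real.sin (2 * (Real.pi / n)))) : ℝ)
    = -(Real.sin (Real.pi / n) / Real.sin (2 * (Real.pi / n)))^2 * r from by ring] at h2
  exact h2

lemma moveIter (hn : 4 ≤ n) {r : ℝ} {g : ℤ}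
    (hp : origamiPts (Uset n) ((r : ℂ) * Eang n g)) (k : ℕ) :
    origamiPts (Uset n)
      ((((-(Real.sin (Real.pi / n) / Real.sin (2 * (Real.pi / n)))^2)^k * r : ℝ) : ℂ)
        * Eang n g) := by
  induction k with
  | zero => rw [pow_zero, one_mul]; exact hp
  | succ k ih =>
      have := moveCycle hn ih
      rw [show (-(Real.sin (Real.pi / n) / Real.sin (2 * (Real.pi / n)))^2 *
          ((-(Real.sin (Real.pi / n) / Real.sin (2 * (Real.pi / n)))^2)^k * r) : ℝ)
        = (-(Real.sin (Real.pi / n) / Real.sin (2 * (Real.pi / n)))^2)^(k+1) * r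
          from by ring] at this
      exact this

lemma base_one : origamiPts (Uset n) (((1 : ℝ) : ℂ) * Eang n 0) := by
  rw [E_zero]
  simpa using origamiPts.one

lemma base_neg_one (hn : 4 ≤ n) : origamiPts (Uset n) (((-1 : ℝ) : ℂ) * Eang n 0) := by
  have hn' : (4 : ℤ) ≤ (n : ℤ) := by exact_mod_cast hn
  have hn0 : 0 < n := by omega
  have h2 := moveFlip hn 1 (nd1 (by norm_num) (by omega)) (nd1 (by omega) (by omega)) base_one
  have h4 := moveFlip hn 1 (nd1 (by norm_num) (by omega)) (nd1 (by omega) (by omega)) h2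
  rw [show (-(-1 : ℝ) : ℝ) = 1 from by norm_num] at h4
  have hm1 : ¬ ((2 * n : ℤ)) ∣ (2 * n - 2) := nd1 (by omega) (by omega)
  have hm2 : ¬ ((2 * n : ℤ)) ∣ (2 * n - 2 + n) := by
    intro hd
    have := Int.dvd_sub hd (dvd_refl (2 * n : ℤ))
    rw [show (2 * n - 2 + n - 2 * n : ℤ) = n - 2 from by ring] at this
    exact nd1 (by omega) (by omega) this
  have h := moveFlip hn (2 * n - 2) hm1 hm2 h4
  rw [show (0 + 2 * 1 + 2 * 1 + 2 * (2 * n - 2) : ℤ) = 4 * n from by ring] at h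
  rwa [E_4n hn0, ← E_zero] at h

lemma base_pos2 (hn : 4 ≤ n) : origamiPts (Uset n) (((1 : ℝ) : ℂ) * Eang n 2) := by
  have hn' : (4 : ℤ) ≤ (n : ℤ) := by exact_mod_cast hn
  have h := moveFlip hn 1 (nd1 (by norm_num) (by omega)) (nd1 (by omega) (by omega))
    (base_neg_one hn)
  rw [show (0 + 2 * 1 : ℤ) = 2 from by ring, show (-(-1 : ℝ) : ℝ) = 1 from by norm_num] at h
  exact h

lemma base_neg2 (hn : 4 ≤ n) : origamiPts (Uset n) (((-1 : ℝ) : ℂ) * Eang n 2) := by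
  have hn' : (4 : ℤ) ≤ (n : ℤ) := by exact_mod_cast hn
  have h := moveFlip hn 1 (nd1 (by norm_num) (by omega)) (nd1 (by omega) (by omega)) base_one
  rw [show (0 + 2 * 1 : ℤ) = 2 from by ring] at h
  exact h

/-- Closure of `R(U_n)` under addition. -/
lemma S_add (hn : 4 ≤ n) {p q : ℂ} (hp : origamiPts (Uset n) p) (hq : origamiPts (Uset n) q) :
    origamiPts (Uset n) (p + q) := by
  have hn' : (4 : ℤ) ≤ (n : ℤ) := by exact_mod_cast hn
  have hn0 : 0 < n := by omega
  set u := Eang n 0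
  set v := Eang n 1
  set w := Eang n 2
  have d01 : ¬ ((2 * n : ℤ)) ∣ ((0 : ℤ) - 1) := by
    rw [show ((0 : ℤ) - 1) = -1 from by ring, dvd_neg]; exact nd1 (by norm_num) (by omega)
  have d01' : ¬ ((2 * n : ℤ)) ∣ ((0 : ℤ) - 1 - n) := by
    rw [show ((0 : ℤ) - 1 - n) = -(n + 1) from by ring, dvd_neg]
    exact nd1 (by omega) (by omega)
  have d02 : ¬ ((2 * n : ℤ)) ∣ ((0 : ℤ) - 2) := by
    rw [show ((0 : ℤ) - 2) = -2 from by ring, dvd_neg]; exact nd1 (by norm_num) (by omega)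
  have d02' : ¬ ((2 * n : ℤ)) ∣ ((0 : ℤ) - 2 - n) := by
    rw [show ((0 : ℤ) - 2 - n) = -(n + 2) from by ring, dvd_neg]
    exact nd1 (by omega) (by omega)
  have d12 : ¬ ((2 * n : ℤ)) ∣ ((1 : ℤ) - 2) := by
    rw [show ((1 : ℤ) - 2) = -1 from by ring, dvd_neg]; exact nd1 (by norm_num) (by omega)
  have d12' : ¬ ((2 * n : ℤ)) ∣ ((1 : ℤ) - 2 - n) := by
    rw [show ((1 : ℤ) - 2 - n) = -(n + 1) from by ring, dvd_neg]
    exact nd1 (by omega) (by omega)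
  have huv := E_ne hn d01 d01'
  have huw := E_ne hn d02 d02'
  have hvw := E_ne hn d12 d12'
  have buv : sbr u v ≠ 0 := sbr_E_ne hn d01 d01'
  have buw : sbr u w ≠ 0 := sbr_E_ne hn d02 d02'
  have bvw : sbr v w ≠ 0 := sbr_E_ne hn d12 d12'
  have hu : u ∈ Uset n := E_memU hn0 0
  have hv : v ∈ Uset n := E_memU hn0 1
  have hw : w ∈ Uset n := E_memU hn0 2
  have hP1 : origamiPts (Uset n) (Iop u w p 0) :=
    origamiPts.inter hu hw huw.1 huw.2 hp origamiPts.zero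
  have hQ1 : origamiPts (Uset n) (Iop u v q 0) :=
    origamiPts.inter hu hv huv.1 huv.2 hq origamiPts.zero
  have hA : origamiPts (Uset n) (Iop v w (Iop u w p 0) (Iop u v q 0)) :=
    origamiPts.inter hv hw hvw.1 hvw.2 hP1 hQ1
  have hP2 : origamiPts (Uset n) (Iop v w p 0) :=
    origamiPts.inter hv hw hvw.1 hvw.2 hp origamiPts.zero
  have hQ2 : origamiPts (Uset n) (Iop u v 0 q) :=
    origamiPts.inter hu hv huv.1 huv.2 origamiPts.zero hq
  have hB : origamiPts (Uset n) (Iop u w (Iop v w p 0) (Iop u v 0 q)) :=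
    origamiPts.inter hu hw huw.1 huw.2 hP2 hQ2
  have h := origamiPts.inter hu hv huv.1 huv.2 hA hB
  rwa [add_identity u v w p q buv buw bvw] at h

end OrigamiDenseAux

namespace OrigamiDenseAux

/-! ### Density -/

lemma dense_pows {t : ℝ} (h0 : 0 < t) (h1 : t < 1) :
    Dense ((AddSubgroup.closure (Set.range fun k : ℕ => (-t) ^ k) : AddSubgroup ℝ) : Set ℝ) := by
  rcases AddSubgroup.dense_or_cyclic
      (AddSubgroup.closure (Set.range fun k : ℕ => (-t) ^ k)) with h | ⟨a, ha⟩
  · exact h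
  · exfalso
    have hmem : ∀ k : ℕ, ∃ m : ℤ, m • a = (-t) ^ k := by
      intro k
      have hk : (-t) ^ k ∈ AddSubgroup.closure (Set.range fun k : ℕ => (-t) ^ k) :=
        AddSubgroup.subset_closure ⟨k, rfl⟩
      rw [ha] at hk
      exact AddSubgroup.mem_closure_singleton.mp hk
    have ha0 : a ≠ 0 := by
      obtain ⟨m, hm⟩ := hmem 0
      intro h
      rw [h, smul_zero, pow_zero] at hm
      exact one_ne_zero hm.symm
    obtain ⟨k, hk⟩ := exists_pow_lt_of_lt_one (abs_pos.mpr ha0) h1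
    obtain ⟨m, hm⟩ := hmem k
    have hm0 : m ≠ 0 := by
      intro h
      rw [h, zero_smul] at hm
      exact pow_ne_zero k (by intro h'; rw [neg_eq_zero] at h'; exact h0.ne' h') hm.symm
    have hle : |a| ≤ |(-t) ^ k| := by
      rw [← hm, zsmul_eq_mul, abs_mul]
      have h1m : (1 : ℝ) ≤ |(m : ℝ)| := by exact_mod_cast Int.one_le_abs hm0
      nlinarith [abs_nonneg a]
    rw [abs_pow, abs_neg, abs_of_pos h0] at hle
    linarith

end OrigamiDenseAux

open OrigamiDenseAux in
/-- For every integer `n > 3`, the set `R(U_n)` is dense in the complex plane.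
Here `U_n` is the group of `2n`-th roots of unity in `ℂ`. -/
theorem stmt_19 (n : ℕ) (hn : 3 < n) :
    Dense {z : ℂ | origamiPts {w : ℂ | w ^ (2 * n) = 1} z} := by
  show Dense {z : ℂ | origamiPts (Uset n) z}
  have hn4 : 4 ≤ n := hn
  have hn0 : 0 < n := by omega
  have hπ := Real.pi_pos
  have hnR : (0 : ℝ) < n := by positivity
  have hnR4 : (4 : ℝ) ≤ n := by exact_mod_cast hn4
  have hθpos : 0 < Real.pi / n := by positivity
  have hθle : Real.pi / n ≤ Real.pi / 4 :=
    div_le_div_of_nonneg_left hπ.le (by norm_num) hnR4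
  have hs1 : 0 < Real.sin (Real.pi / n) :=
    Real.sin_pos_of_pos_of_lt_pi hθpos (by linarith)
  have hs2 : 0 < Real.sin (2 * (Real.pi / n)) :=
    Real.sin_pos_of_pos_of_lt_pi (by linarith) (by linarith)
  have hlt : Real.sin (Real.pi / n) < Real.sin (2 * (Real.pi / n)) :=
    Real.strictMonoOn_sin ⟨by linarith, by linarith⟩ ⟨by linarith, by linarith⟩ (by linarith)
  have ht'0 : 0 < Real.sin (Real.pi / n) / Real.sin (2 * (Real.pi / n)) := div_pos hs1 hs2
  have ht'1 : Real.sin (Real.pi / n) / Real.sin (2 * (Real.pi / n)) < 1 :=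
    (div_lt_one hs2).mpr hlt
  have ht0 : 0 < (Real.sin (Real.pi / n) / Real.sin (2 * (Real.pi / n))) ^ 2 := by positivity
  have ht1 : (Real.sin (Real.pi / n) / Real.sin (2 * (Real.pi / n))) ^ 2 < 1 :=
    pow_lt_one₀ ht'0.le ht'1 two_ne_zero
  -- the dense subgroup of coefficients
  set T : ℝ := (Real.sin (Real.pi / n) / Real.sin (2 * (Real.pi / n))) ^ 2 with hT
  have hGdense := dense_pows ht0 ht1
  set G := AddSubgroup.closure (Set.range fun k : ℕ => (-T) ^ k) with hG
  -- membership of subgroup coefficients in the origami set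
  have key : ∀ (g : ℤ), origamiPts (Uset n) (((1 : ℝ) : ℂ) * Eang n g) →
      origamiPts (Uset n) (((-1 : ℝ) : ℂ) * Eang n g) →
      ∀ r ∈ G, origamiPts (Uset n) ((r : ℂ) * Eang n g) := by
    intro g hpos hneg r hr
    have main : origamiPts (Uset n) ((r : ℂ) * Eang n g) ∧
        origamiPts (Uset n) (((-r : ℝ) : ℂ) * Eang n g) := by
      refine AddSubgroup.closure_induction ?_ ?_ ?_ ?_ hr
      · rintro x ⟨k, rfl⟩
        constructor
        · have h := moveIter hn4 hpos k
          rwa [mul_one] at h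
        · have h := moveIter hn4 hneg k
          rwa [show ((-(Real.sin (Real.pi / n) / Real.sin (2 * (Real.pi / n))) ^ 2) ^ k
              * (-1) : ℝ) = -((-(Real.sin (Real.pi / n) / Real.sin (2 * (Real.pi / n)))
              ^ 2) ^ k) from by ring] at h
      · refine ⟨?_, ?_⟩
        · rw [show ((0 : ℝ) : ℂ) = 0 from by norm_num, zero_mul]; exact origamiPts.zero
        · rw [show ((-0 : ℝ) : ℂ) = 0 from by norm_num, zero_mul]; exact origamiPts.zero
      · intro x y _ _ ihx ihy
        constructor
        · have h := S_add hn4 ihx.1 ihy.1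
          rwa [show ((x : ℂ) * Eang n g + (y : ℂ) * Eang n g)
            = ((x + y : ℝ) : ℂ) * Eang n g from by push_cast; ring] at h
        · have h := S_add hn4 ihx.2 ihy.2
          rwa [show (((-x : ℝ) : ℂ) * Eang n g + ((-y : ℝ) : ℂ) * Eang n g)
            = ((-(x + y) : ℝ) : ℂ) * Eang n g from by push_cast; ring] at h
      · intro x _ ih
        exact ⟨ih.2, by rw [neg_neg]; exact ih.1⟩
    exact main.1
  -- decompose an arbitrary point over the basis (1, ζ²)
  intro z
  rw [Metric.mem_closure_iff]
  intro ε hε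
  have hw2 : Eang n 2 = Complex.exp (((2 * (Real.pi / n) : ℝ) : ℂ) * Complex.I) := by
    rw [Eang]; congr 1; push_cast; ring
  have him : (Eang n 2).im = Real.sin (2 * (Real.pi / n)) := by
    rw [hw2, Complex.exp_ofReal_mul_I_im]
  have habs : ‖Eang n 2‖ = 1 := by
    rw [hw2, Complex.norm_exp_ofReal_mul_I]
  set y : ℝ := z.im / Real.sin (2 * (Real.pi / n)) with hy
  set x : ℝ := z.re - y * (Eang n 2).re with hx
  have hz : z = (x : ℂ) + (y : ℂ) * Eang n 2 := by
    apply Complex.ext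
    · simp [hx, Complex.add_re, Complex.re_ofReal_mul, Complex.ofReal_re]
    · simp only [Complex.add_im, Complex.ofReal_im, Complex.im_ofReal_mul, him, zero_add, hy]
      exact (div_mul_cancel₀ _ hs2.ne').symm
  obtain ⟨x', hx'G, hx'd⟩ := Metric.mem_closure_iff.mp (hGdense x) (ε / 2) (by linarith)
  obtain ⟨y', hy'G, hy'd⟩ := Metric.mem_closure_iff.mp (hGdense y) (ε / 2) (by linarith)
  have memx : origamiPts (Uset n) ((x' : ℂ) * Eang n 0) :=
    key 0 base_one (base_neg_one hn4) x' hx'G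
  have memy : origamiPts (Uset n) ((y' : ℂ) * Eang n 2) :=
    key 2 (base_pos2 hn4) (base_neg2 hn4) y' hy'G
  refine ⟨(x' : ℂ) * Eang n 0 + (y' : ℂ) * Eang n 2, S_add hn4 memx memy, ?_⟩
  rw [E_zero, mul_one]
  have hdiff : z - ((x' : ℂ) + (y' : ℂ) * Eang n 2)
      = ((x - x' : ℝ) : ℂ) + ((y - y' : ℝ) : ℂ) * Eang n 2 := by
    rw [hz]; push_cast; ring
  rw [Complex.dist_eq, hdiff]
  calc ‖((x - x' : ℝ) : ℂ) + ((y - y' : ℝ) : ℂ) * Eang n 2‖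
      ≤ ‖((x - x' : ℝ) : ℂ)‖ + ‖((y - y' : ℝ) : ℂ) * Eang n 2‖ :=
        norm_add_le _ _
    _ = |x - x'| + |y - y'| := by
        rw [norm_mul, habs, mul_one, Complex.norm_real, Complex.norm_real, Real.norm_eq_abs,
            Real.norm_eq_abs]
    _ < ε / 2 + ε / 2 := by
        have d1 : |x - x'| < ε / 2 := by rwa [Real.dist_eq] at hx'd
        have d2 : |y - y'| < ε / 2 := by rwa [Real.dist_eq] at hy'd
        exact add_lt_add d1 d2
    _ = ε := by ring
end
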